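/- Let n ≥ 1 be an integer and i ∈ ℤ/2ℤ. Then every array X of rank n has at most one (n,i)-hook, i.e. |𝓗_{n,i}(X)| ≤ 1. -/

import Mathlib

open Finset

namespace ArrayComb

/-- Cells of an array: an element of ℤ × ℤ/2ℤ (arrays are those supported on ℕ × ℤ/2ℤ). -/
abbrev Cell : Type := ℤ × ZMod 2

/-- An array is a finite subset of ℕ × ℤ/2ℤ. -/
def IsArray (X : Finset Cell) : Prop := ∀ c ∈ X, 0 ≤ c.1

/-- The row `Xʲ = {x : (x,j) ∈ X}`. -/
def row (X : Finset Cell) (j : ZMod 2) : Finset ℤ :=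
  (X.filter fun c => c.2 = j).image Prod.fst

def cup (X : Finset Cell) : Finset ℤ := row X 0 ∪ row X 1
def cap (X : Finset Cell) : Finset ℤ := row X 0 ∩ row X 1
def sdiff' (X : Finset Cell) : Finset ℤ := symmDiff (row X 0) (row X 1)

/-- The pairing `⟨A,B⟩ = |A ∩ B| mod 2`. -/
def pairing (A B : Finset ℤ) : ZMod 2 := ((A ∩ B).card : ZMod 2)

/-- The defect `Def(X) = |X⁰| - |X¹|`. -/
def defect (X : Finset Cell) : ℤ := ((row X 0).card : ℤ) - ((row X 1).card : ℤ)

/-- The special array `X_sp`. -/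
noncomputable def sp (X : Finset Cell) : Finset Cell :=
  ((cap X) ×ˢ (Finset.univ : Finset (ZMod 2))) ∪
    (sdiff' X).image (fun x => (x, (((sdiff' X).card : ZMod 2) + pairing (sdiff' X) (Finset.Icc 0 x))))

/-- `X^♯ = X¹ ⊖ (X_sp)¹`. -/
noncomputable def sharp (X : Finset Cell) : Finset ℤ := symmDiff (row X 1) (row (sp X) 1)

/-- `s(X) = 2^{(|X^⊖| - Def(X_sp))/2}`. -/
noncomputable def sconst (X : Finset Cell) : ℕ := 2 ^ (((sdiff' X).card - (defect (sp X)).toNat) / 2)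

/-- `d(X) = (Def(X) - Def(X_sp))/2`. -/
noncomputable def dd (X : Finset Cell) : ℤ := (defect X - defect (sp X)) / 2

/-- The map `D_{d,i}` on cells. -/
def Dcell (d : ℤ) (i : ZMod 2) (c : Cell) : Cell := (c.1 - d, i + c.2)

/-- The map `D_{d,i}` applied elementwise to a finite set of cells. -/
def Dset (d : ℤ) (i : ZMod 2) (H : Finset Cell) : Finset Cell := H.image (Dcell d i)

/-- `X ∖_{d,i} H = X ⊖ H ⊖ D_{d,i}(H)`. -/
def remove (d : ℤ) (i : ZMod 2) (X H : Finset Cell) : Finset Cell :=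
  symmDiff (symmDiff X H) (Dset d i H)

/-- The `(d,i)`-hooks of `X`. -/
def hooks (d : ℤ) (i : ZMod 2) (X : Finset Cell) : Finset Cell :=
  X.filter fun c => 0 ≤ c.1 - d ∧ Dcell d i c ∉ X

/-- The leg parity `l_{d,i}(λ, X)`. -/
noncomputable def leg (d : ℤ) (i : ZMod 2) (c : Cell) (X : Finset Cell) : ZMod 2 :=
  pairing (Finset.Icc 0 c.1) (row X c.2) +
    pairing (Finset.Icc 0 (c.1 - d)) (row (remove d i X {c}) (i + c.2))

/-- `X^op`, interchanging the two rows. -/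
def opA (X : Finset Cell) : Finset Cell := Dset 0 1 X

/-- The free ℂ-module `ℂ[𝒫]` on the set of arrays. -/
abbrev CP := Finset Cell →₀ ℂ

/-- The similarity class `Sim(X)`: all arrays `Y` with `Y^∪ = X^∪` and `Y^∩ = X^∩`,
realized as a finite set. -/
def SimSet (X : Finset Cell) : Finset (Finset Cell) :=
  ((cup X ×ˢ (Finset.univ : Finset (ZMod 2))).powerset).filter
    (fun Y => cup Y = cup X ∧ cap Y = cap X)

/-- The Fourier transform `𝓡` on basis elements. -/
noncomputable def Rfun (X : Finset Cell) : CP :=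
  (sconst X : ℂ)⁻¹ •
    ∑ Y ∈ SimSet X, ((-1 : ℂ) ^ (pairing (sharp X) (sharp Y)).val) • Finsupp.single Y (1 : ℂ)

/-- The hook-removal operator `𝓗ʲ_{d,i}` on basis elements. -/
noncomputable def Hfun (d : ℤ) (i j : ZMod 2) (X : Finset Cell) : CP :=
  ∑ c ∈ hooks d i X,
    ((-1 : ℂ) ^ (j * c.2 + leg d i c X).val) • Finsupp.single (remove d i X {c}) (1 : ℂ)

/-- Extension of a map defined on basis elements to a ℂ-linear endomorphism of `ℂ[𝒫]`. -/
noncomputable def lift (f : Finset Cell → CP) : CP →ₗ[ℂ] CP :=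
  Finsupp.linearCombination ℂ f

/-- The rank `rk(X) = Σ_{x∈X⁰} x + Σ_{x∈X¹} x - ⌊((|X|-1)/2)²⌋`. -/
def rk (X : Finset Cell) : ℤ :=
  (∑ x ∈ row X 0, x) + (∑ x ∈ row X 1, x) - ((X.card : ℤ) - 1) ^ 2 / 4

section Aux

lemma dcell_injective (d : ℤ) (i : ZMod 2) : Function.Injective (Dcell d i) := by
  intro a b h
  have h1 : a.1 - d = b.1 - d := congrArg Prod.fst h
  have h2 : i + a.2 = i + b.2 := congrArg Prod.snd h
  exact Prod.ext (by omega) (by exact add_left_cancel h2)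

lemma sum_row (X : Finset Cell) (j : ZMod 2) :
    ∑ x ∈ row X j, x = ∑ c ∈ X.filter (fun c => c.2 = j), c.1 := by
  rw [row, Finset.sum_image]
  intro a ha b hb h
  simp only [mem_filter, Finset.mem_coe] at ha hb
  exact Prod.ext h (ha.2.trans hb.2.symm)

lemma card_row (X : Finset Cell) (j : ZMod 2) :
    (row X j).card = (X.filter (fun c => c.2 = j)).card := by
  rw [row, Finset.card_image_of_injOn]
  intro a ha b hb h
  simp only [mem_filter, Finset.mem_coe] at ha hb
  exact Prod.ext h (ha.2.trans hb.2.symm)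

lemma filter_not_zero (X : Finset Cell) :
    X.filter (fun c => ¬ c.2 = 0) = X.filter (fun c => c.2 = (1 : ZMod 2)) := by
  apply Finset.filter_congr
  intro c _
  have : ∀ z : ZMod 2, ¬ z = 0 ↔ z = 1 := by decide
  exact this c.2

lemma weight_split (X : Finset Cell) :
    (∑ x ∈ row X 0, x) + (∑ x ∈ row X 1, x) = ∑ c ∈ X, c.1 := by
  rw [sum_row, sum_row, ← Finset.sum_filter_add_sum_filter_not X (fun c => c.2 = 0) (fun c => c.1),
    filter_not_zero]

lemma card_split (X : Finset Cell) :
    (row X 0).card + (row X 1).card = X.card := by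
  rw [card_row, card_row]
  conv_rhs => rw [← Finset.card_filter_add_card_filter_not (p := fun c => c.2 = (0 : ZMod 2)) (s := X)]
  rw [filter_not_zero]

lemma rk_eq (X : Finset Cell) :
    rk X = (∑ c ∈ X, c.1) - ((X.card : ℤ) - 1) ^ 2 / 4 := by
  rw [rk, weight_split]

lemma mem_row {X : Finset Cell} {j : ZMod 2} {x : ℤ} (h : x ∈ row X j) : (x, j) ∈ X := by
  simp only [row, mem_image, mem_filter] at h
  obtain ⟨⟨a, b⟩, ⟨hc, h2⟩, h3⟩ := h
  subst h2; subst h3; exact hc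

lemma sum_ge (S : Finset ℤ) (h : ∀ x ∈ S, 0 ≤ x) :
    (S.card : ℤ) * ((S.card : ℤ) - 1) ≤ 2 * ∑ x ∈ S, x := by
  induction' hn : S.card with n ih generalizing S
  · rw [Finset.card_eq_zero] at hn
    subst hn; simp
  · have hne : S.Nonempty := by
      rw [← Finset.card_pos, hn]; omega
    set M := S.max' hne with hM
    have hMS : M ∈ S := S.max'_mem hne
    have hsub : S ⊆ Finset.Icc 0 M := by
      intro x hx
      exact Finset.mem_Icc.mpr ⟨h x hx, S.le_max' x hx⟩
    have hcard : S.card ≤ (Finset.Icc (0:ℤ) M).card := Finset.card_le_card hsub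
    rw [Int.card_Icc, hn] at hcard
    have hMn : (n : ℤ) ≤ M := by omega
    have hcard' : (S.erase M).card = n := by
      rw [Finset.card_erase_of_mem hMS, hn]
      omega
    have ih' := ih (S.erase M) (fun x hx => h x (Finset.mem_of_mem_erase hx)) hcard'
    have hsum : (∑ x ∈ S.erase M, x) + M = ∑ x ∈ S, x :=
      Finset.sum_erase_add S _ hMS
    push_cast
    push_cast at ih'
    nlinarith [ih', hMn, hsum]

lemma rk_nonneg (X : Finset Cell) (hX : IsArray X) : 0 ≤ rk X := by
  have h0 : ∀ x ∈ row X 0, 0 ≤ x := fun x hx => hX _ (mem_row hx)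
  have h1 : ∀ x ∈ row X 1, 0 ≤ x := fun x hx => hX _ (mem_row hx)
  have g0 := sum_ge _ h0
  have g1 := sum_ge _ h1
  have hc := card_split X
  rw [rk]
  set A : ℤ := ((row X 0).card : ℤ) with hA
  set B : ℤ := ((row X 1).card : ℤ) with hB
  set S0 : ℤ := ∑ x ∈ row X 0, x
  set S1 : ℤ := ∑ x ∈ row X 1, x
  have hm : (X.card : ℤ) = A + B := by rw [hA, hB]; exact_mod_cast hc.symm
  have hS0 : 0 ≤ S0 := Finset.sum_nonneg h0
  have hS1 : 0 ≤ S1 := Finset.sum_nonneg h1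
  rw [hm]
  rcases eq_or_ne A B with hab | hab
  · -- A = B : (A+B-1)^2 = 4*(A*A-A)+1
    have hk : (A + B - 1) ^ 2 = 4 * (A * A - A) + 1 := by rw [← hab]; ring
    have h4 : 4 * (A * A - A) ≤ 4 * (S0 + S1) := by nlinarith
    rw [hk]
    have hq : (4 * (A * A - A) + 1) / 4 = A * A - A := by omega
    rw [hq]; omega
  · have hsq : 1 ≤ (A - B) ^ 2 := by
      have : A - B ≠ 0 := sub_ne_zero.mpr hab
      nlinarith [sq_pos_of_ne_zero this]
    have hK : (A + B - 1) ^ 2 ≤ 4 * (S0 + S1) := by nlinarith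
    have := Int.ediv_le_ediv (by norm_num : (0:ℤ) < 4) hK
    have h4 : (4 * (S0 + S1)) / 4 = S0 + S1 := by omega
    omega

lemma hooks_mem {d : ℤ} {i : ZMod 2} {X : Finset Cell} {c : Cell} (hc : c ∈ hooks d i X) :
    c ∈ X ∧ 0 ≤ c.1 - d ∧ Dcell d i c ∉ X := by
  simp only [hooks, mem_filter] at hc
  exact ⟨hc.1, hc.2.1, hc.2.2⟩

lemma remove_single {d : ℤ} {i : ZMod 2} {X : Finset Cell} {c : Cell}
    (hc : c ∈ X) (hdc : Dcell d i c ∉ X) :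
    remove d i X {c} = insert (Dcell d i c) (X.erase c) := by
  ext a
  simp only [remove, Dset, Finset.image_singleton, Finset.mem_symmDiff, Finset.mem_singleton,
    Finset.mem_insert, Finset.mem_erase]
  have hcd : c ≠ Dcell d i c := fun h => hdc (h ▸ hc)
  by_cases h1 : a = c <;> by_cases h2 : a = Dcell d i c <;> simp_all

lemma remove_isArray {d : ℤ} {i : ZMod 2} {X : Finset Cell} {c : Cell}
    (hX : IsArray X) (hc : c ∈ hooks d i X) : IsArray (remove d i X {c}) := by
  obtain ⟨h1, h2, h3⟩ := hooks_mem hc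
  rw [remove_single h1 h3]
  intro a ha
  rcases Finset.mem_insert.mp ha with rfl | ha'
  · exact h2
  · exact hX a (Finset.mem_of_mem_erase ha')

lemma remove_rk {d : ℤ} {i : ZMod 2} {X : Finset Cell} {c : Cell}
    (hc : c ∈ hooks d i X) : rk (remove d i X {c}) = rk X - d := by
  obtain ⟨h1, h2, h3⟩ := hooks_mem hc
  have hnm : Dcell d i c ∉ X.erase c := fun h => h3 (Finset.mem_of_mem_erase h)
  rw [rk_eq, rk_eq, remove_single h1 h3]
  have hcard : (insert (Dcell d i c) (X.erase c)).card = X.card := by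
    rw [Finset.card_insert_of_notMem hnm, Finset.card_erase_of_mem h1]
    have : 1 ≤ X.card := Finset.card_pos.mpr ⟨c, h1⟩
    omega
  have hsum : ∑ a ∈ insert (Dcell d i c) (X.erase c), a.1 = (∑ a ∈ X, a.1) - d := by
    rw [Finset.sum_insert hnm, ← Finset.sum_erase_add X (fun a => a.1) h1]
    simp only [Dcell]
    ring
  rw [hcard, hsum]
  ring

lemma remove_hook {d : ℤ} {i : ZMod 2} {X : Finset Cell} {c c' : Cell}
    (hc : c ∈ hooks d i X) (hc' : c' ∈ hooks d i X) (hne : c' ≠ c) :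
    c' ∈ hooks d i (remove d i X {c}) := by
  obtain ⟨h1, h2, h3⟩ := hooks_mem hc
  obtain ⟨h1', h2', h3'⟩ := hooks_mem hc'
  rw [remove_single h1 h3]
  simp only [hooks, mem_filter, Finset.mem_insert, Finset.mem_erase]
  refine ⟨Or.inr ⟨hne, h1'⟩, h2', ?_⟩
  rintro (hEq | hEq)
  · exact hne (dcell_injective d i hEq)
  · exact h3' hEq.2

end Aux

/-- An array of rank `n ≥ 1` has at most one `(n,i)`-hook. -/
theorem n_hooks (n : ℕ) (hn : 1 ≤ n) (i : ZMod 2) (X : Finset Cell) (hX : IsArray X)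
    (hrk : rk X = (n : ℤ)) : (hooks (n : ℤ) i X).card ≤ 1 := by
  by_contra hcon
  push_neg at hcon
  obtain ⟨c, hc, c', hc', hne⟩ := Finset.one_lt_card.mp hcon
  set Y := remove (n : ℤ) i X {c} with hY
  have hYarr : IsArray Y := remove_isArray hX hc
  have hYrk : rk Y = 0 := by rw [hY, remove_rk hc, hrk]; ring
  have hc'Y : c' ∈ hooks (n : ℤ) i Y := remove_hook hc hc' (fun h => hne h.symm)
  set Z := remove (n : ℤ) i Y {c'} with hZ
  have hZarr : IsArray Z := remove_isArray hYarr hc'Y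
  have hZrk : rk Z = -(n : ℤ) := by rw [hZ, remove_rk hc'Y, hYrk]; ring
  have := rk_nonneg Z hZarr
  rw [hZrk] at this
  omega

end ArrayComb
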